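/- There is no Lie algebra automorphism Ψ of g₅ satisfying all of: Ψ(W) = εW for some ε ∈ {1, −1}; Ψ(Y₁) ∈ 2ε₁Y₁ + span{Y₂, Z, W} for some ε₁ ∈ {1, −1}; and Ψ(Y₂) ∈ ε₂Y₂ + span{Z, W} for some ε₂ ∈ {1, −1}. -/
import Mathlib


noncomputable section

/-- The bracket of the Lie algebra g₅ on ℝ⁵ with basis X₁,Y₁,Y₂,Z,W at coordinates 0,…,4. -/
def br5 (u v : Fin 5 → ℝ) : Fin 5 → ℝ :=
  ![0, 0, 0,
    u 0 * v 1 - u 1 * v 0,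
    u 0 * v 3 - u 3 * v 0 + (u 1 * v 2 - u 2 * v 1)]

def Y1 : Fin 5 → ℝ := Pi.single 1 1
def Y2 : Fin 5 → ℝ := Pi.single 2 1
def Zv : Fin 5 → ℝ := Pi.single 3 1
def Wv : Fin 5 → ℝ := Pi.single 4 1

lemma comp_zero_of_span {s : Set (Fin 5 → ℝ)} (i : Fin 5) (h : ∀ x ∈ s, x i = 0)
    {x : Fin 5 → ℝ} (hx : x ∈ Submodule.span ℝ s) : x i = 0 := by
  have hle : s ⊆ (LinearMap.ker (LinearMap.proj i : (Fin 5 → ℝ) →ₗ[ℝ] ℝ) : Set (Fin 5 → ℝ)) := by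
    intro y hy; simpa [LinearMap.mem_ker] using h y hy
  exact (Submodule.span_le.mpr hle) hx

/-- There is no Lie algebra automorphism Ψ of g₅ with Ψ(W) = ±W,
Ψ(Y₁) ∈ ±2Y₁ + span{Y₂,Z,W}, and Ψ(Y₂) ∈ ±Y₂ + span{Z,W}. -/
theorem stmt12 :
    ¬ ∃ (Ψ : (Fin 5 → ℝ) → (Fin 5 → ℝ)) (ε ε₁ ε₂ : ℝ),
      IsLinearMap ℝ Ψ ∧ Function.Bijective Ψ ∧
      (∀ u v, Ψ (br5 u v) = br5 (Ψ u) (Ψ v)) ∧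
      (ε = 1 ∨ ε = -1) ∧ (ε₁ = 1 ∨ ε₁ = -1) ∧ (ε₂ = 1 ∨ ε₂ = -1) ∧
      Ψ Wv = ε • Wv ∧
      Ψ Y1 - (2 * ε₁) • Y1 ∈ Submodule.span ℝ {Y2, Zv, Wv} ∧
      Ψ Y2 - ε₂ • Y2 ∈ Submodule.span ℝ {Zv, Wv} := by
  rintro ⟨Ψ, ε, ε₁, ε₂, -, -, hbr, hε, hε₁, hε₂, hW, h1, h2⟩
  -- components from span memberships
  have hY1_0 : (Ψ Y1 - (2 * ε₁) • Y1) 0 = 0 := by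
    refine comp_zero_of_span 0 ?_ h1
    rintro x (rfl | rfl | rfl) <;> simp [Y2, Zv, Wv, Pi.single_apply]
  have hY1_1 : (Ψ Y1 - (2 * ε₁) • Y1) 1 = 0 := by
    refine comp_zero_of_span 1 ?_ h1
    rintro x (rfl | rfl | rfl) <;> simp [Y2, Zv, Wv, Pi.single_apply]
  have hY2_0 : (Ψ Y2 - ε₂ • Y2) 0 = 0 := by
    refine comp_zero_of_span 0 ?_ h2
    rintro x (rfl | rfl) <;> simp [Zv, Wv, Pi.single_apply]
  have hY2_1 : (Ψ Y2 - ε₂ • Y2) 1 = 0 := by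
    refine comp_zero_of_span 1 ?_ h2
    rintro x (rfl | rfl) <;> simp [Zv, Wv, Pi.single_apply]
  have hY2_2 : (Ψ Y2 - ε₂ • Y2) 2 = 0 := by
    refine comp_zero_of_span 2 ?_ h2
    rintro x (rfl | rfl) <;> simp [Zv, Wv, Pi.single_apply]
  have v10 : Y1 0 = 0 := by simp [Y1, Pi.single_apply]
  have v11 : Y1 1 = 1 := by simp [Y1, Pi.single_apply]
  have v20 : Y2 0 = 0 := by simp [Y2, Pi.single_apply]
  have v21 : Y2 1 = 0 := by simp [Y2, Pi.single_apply]
  have v22 : Y2 2 = 1 := by simp [Y2, Pi.single_apply]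
  have e10 : Ψ Y1 0 = 0 := by
    have := hY1_0; simp [Pi.sub_apply, Pi.smul_apply, smul_eq_mul, v10] at this; linarith
  have e11 : Ψ Y1 1 = 2 * ε₁ := by
    have := hY1_1; simp [Pi.sub_apply, Pi.smul_apply, smul_eq_mul, v11, sub_eq_zero] at this; linarith
  have e20 : Ψ Y2 0 = 0 := by
    have := hY2_0; simp [Pi.sub_apply, Pi.smul_apply, smul_eq_mul, v20] at this; linarith
  have e21 : Ψ Y2 1 = 0 := by
    have := hY2_1; simp [Pi.sub_apply, Pi.smul_apply, smul_eq_mul, v21] at this; linarith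
  have e22 : Ψ Y2 2 = ε₂ := by
    have := hY2_2; simp [Pi.sub_apply, Pi.smul_apply, smul_eq_mul, v22, sub_eq_zero] at this; linarith
  -- bracket [Y1,Y2] = W
  have hbrY : br5 Y1 Y2 = Wv := by
    funext i
    fin_cases i <;> simp [br5, Y1, Y2, Wv, Pi.single_apply]
  have key := congrFun (hbr Y1 Y2) 4
  rw [hbrY, hW] at key
  have hlhs : (ε • Wv) 4 = ε := by simp [Wv, Pi.single_apply]
  have hrhs : br5 (Ψ Y1) (Ψ Y2) 4 = 2 * ε₁ * ε₂ := by
    simp [br5, e10, e11, e20, e21, e22]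
  rw [hlhs, hrhs] at key
  rcases hε with rfl | rfl <;> rcases hε₁ with rfl | rfl <;> rcases hε₂ with rfl | rfl <;>
    norm_num at key
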